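/- Let f : ℝᵈ → ℝ be convex differentiable with L-Lipschitz gradient, K a convex cone, and x* a minimizer of f over K with ‖x*‖ = R. If a point z ∈ K satisfies ⟪∇f(z), z⟫ = 0 and f(z) - f(x*) ≤ ε, then ‖∇f(z) - ∇f(x*)‖² ≤ 2Lε; consequently the distance of ∇f(z) to the dual cone K* satisfies dist(∇f(z), K*)² ≤ 2Lε. -/

import Mathlib

open RealInnerProductSpace

private lemma lineDerivAux {d : ℕ} (f : EuclideanSpace ℝ (Fin d) → ℝ)
    (hdiff : Differentiable ℝ f) (x v : EuclideanSpace ℝ (Fin d)) (t : ℝ) :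
    HasDerivAt (fun t : ℝ => f (x + t • v)) ⟪gradient f (x + t • v), v⟫ t := by
  have h1 : HasDerivAt (fun t : ℝ => x + t • v) v t := by
    simpa using ((hasDerivAt_id t).smul_const v).const_add x
  exact (((hdiff (x + t • v)).hasGradientAt.hasFDerivAt).comp_hasDerivAt t h1).congr_deriv (by simp)

/-- If moving in direction `v` eventually does not decrease `f`, the directional
derivative is nonnegative. -/
private lemma dirDeriv_nonneg {d : ℕ} (f : EuclideanSpace ℝ (Fin d) → ℝ)
    (hdiff : Differentiable ℝ f) (x v : EuclideanSpace ℝ (Fin d))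
    (h : ∀ᶠ t in nhdsWithin (0:ℝ) (Set.Ioi 0), f x ≤ f (x + t • v)) :
    0 ≤ ⟪gradient f x, v⟫ := by
  have hd : HasDerivAt (fun t : ℝ => f (x + t • v)) ⟪gradient f x, v⟫ 0 := by
    have := lineDerivAux f hdiff x v 0
    simpa using this
  have htend := hasDerivAt_iff_tendsto_slope.mp hd
  have htend' : Filter.Tendsto (slope (fun t : ℝ => f (x + t • v)) 0)
      (nhdsWithin 0 (Set.Ioi 0)) (nhds ⟪gradient f x, v⟫) :=
    htend.mono_left (nhdsWithin_mono _ (fun t ht => ne_of_gt ht))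
  refine ge_of_tendsto htend' ?_
  filter_upwards [h, self_mem_nhdsWithin] with t ht ht'
  have ht0 : (0:ℝ) < t := ht'
  have : f x ≤ f (x + t • v) := ht
  simp only [slope_def_field]
  rw [div_eq_mul_inv]
  have : 0 ≤ f (x + t • v) - f (x + (0:ℝ) • v) := by simpa using ht
  have h2 : (0:ℝ) ≤ (f (x + t • v) - f (x + (0:ℝ) • v)) * (t - 0)⁻¹ := by
    apply mul_nonneg this
    simp [le_of_lt ht0]
  simpa [div_eq_mul_inv] using h2

/-- Subgradient inequality for convex differentiable functions. -/
private lemma subgrad {d : ℕ} (f : EuclideanSpace ℝ (Fin d) → ℝ)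
    (hconv : ConvexOn ℝ Set.univ f) (hdiff : Differentiable ℝ f)
    (x y : EuclideanSpace ℝ (Fin d)) :
    f x + ⟪gradient f x, y - x⟫ ≤ f y := by
  have hd : HasDerivAt (fun t : ℝ => f (x + t • (y - x))) ⟪gradient f x, y - x⟫ 0 := by
    have := lineDerivAux f hdiff x (y - x) 0
    simpa using this
  have htend := hasDerivAt_iff_tendsto_slope.mp hd
  have htend' : Filter.Tendsto (slope (fun t : ℝ => f (x + t • (y - x))) 0)
      (nhdsWithin 0 (Set.Ioi 0)) (nhds ⟪gradient f x, y - x⟫) :=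
    htend.mono_left (nhdsWithin_mono _ (fun t ht => ne_of_gt ht))
  have hle : ⟪gradient f x, y - x⟫ ≤ f y - f x := by
    refine le_of_tendsto htend' ?_
    have hmem : Set.Ioo (0:ℝ) 1 ∈ nhdsWithin (0:ℝ) (Set.Ioi 0) := by
      rw [mem_nhdsWithin]
      exact ⟨Set.Iio 1, isOpen_Iio, by norm_num, fun t ht => ⟨ht.2, ht.1⟩⟩
    filter_upwards [hmem] with t ht
    have ht0 : (0:ℝ) < t := ht.1
    have ht1 : t ≤ 1 := le_of_lt ht.2
    have hconvineq := hconv.2 (Set.mem_univ x) (Set.mem_univ y)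
      (by linarith : (0:ℝ) ≤ 1 - t) (le_of_lt ht0) (by ring)
    have heq : x + t • (y - x) = (1 - t) • x + t • y := by
      rw [smul_sub, sub_smul]; module
    rw [slope_def_field]
    have : f (x + t • (y - x)) ≤ (1 - t) * f x + t * f y := by
      rw [heq]; simpa using hconvineq
    have h0 : f (x + (0:ℝ) • (y - x)) = f x := by simp
    rw [sub_zero, h0, div_le_iff₀ ht0]
    nlinarith
  linarith

/-- Descent lemma. -/
private lemma descent {d : ℕ} (f : EuclideanSpace ℝ (Fin d) → ℝ)
    (hdiff : Differentiable ℝ f) (L : ℝ) (hL : 0 < L)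
    (hLip : ∀ x y, ‖gradient f x - gradient f y‖ ≤ L * ‖x - y‖)
    (x v : EuclideanSpace ℝ (Fin d)) :
    f (x + v) ≤ f x + ⟪gradient f x, v⟫ + L / 2 * ‖v‖ ^ 2 := by
  set h : ℝ → ℝ := fun t => f (x + t • v) - t * ⟪gradient f x, v⟫ - L * t ^ 2 * ‖v‖ ^ 2 / 2
    with hh
  have hderiv : ∀ t : ℝ, HasDerivAt h
      (⟪gradient f (x + t • v), v⟫ - ⟪gradient f x, v⟫ - L * t * ‖v‖ ^ 2) t := by
    intro t
    have h1 := lineDerivAux f hdiff x v t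
    have h2 : HasDerivAt (fun t : ℝ => t * ⟪gradient f x, v⟫) ⟪gradient f x, v⟫ t := by
      simpa using (hasDerivAt_id t).mul_const ⟪gradient f x, v⟫
    have h3 : HasDerivAt (fun t : ℝ => L * t ^ 2 * ‖v‖ ^ 2 / 2) (L * t * ‖v‖ ^ 2) t := by
      have := ((hasDerivAt_pow 2 t).const_mul L).mul_const (‖v‖ ^ 2)
      have := this.div_const 2
      refine this.congr_deriv ?_
      norm_num
      ring
    exact (h1.sub h2).sub h3
  have hmono : AntitoneOn h (Set.Icc 0 1) := by
    apply antitoneOn_of_deriv_nonpos (convex_Icc 0 1)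
    · exact fun t _ => (hderiv t).continuousAt.continuousWithinAt
    · intro t _
      exact (hderiv t).differentiableAt.differentiableWithinAt
    · intro t ht
      rw [interior_Icc] at ht
      rw [(hderiv t).deriv]
      have hb : ⟪gradient f (x + t • v) - gradient f x, v⟫ ≤
          ‖gradient f (x + t • v) - gradient f x‖ * ‖v‖ :=
        real_inner_le_norm _ _
      have hlip' : ‖gradient f (x + t • v) - gradient f x‖ ≤ L * (t * ‖v‖) := by
        have := hLip (x + t • v) x
        simpa [norm_smul, abs_of_pos ht.1] using this
      have hinner : ⟪gradient f (x + t • v), v⟫ - ⟪gradient f x, v⟫ =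
          ⟪gradient f (x + t • v) - gradient f x, v⟫ := by
        rw [inner_sub_left]
      rw [hinner]
      have hv : (0:ℝ) ≤ ‖v‖ := norm_nonneg _
      nlinarith [mul_le_mul_of_nonneg_right hlip' hv]
  have := hmono (Set.left_mem_Icc.mpr zero_le_one) (Set.right_mem_Icc.mpr zero_le_one)
    zero_le_one
  simp only [hh] at this
  simp only [one_smul, zero_smul, add_zero, one_pow, mul_one, zero_pow, mul_zero,
    zero_mul, zero_div, sub_zero, one_mul] at this
  nlinarith [this]

theorem stmt3 {d : ℕ} (K : Set (EuclideanSpace ℝ (Fin d)))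
    (f : EuclideanSpace ℝ (Fin d) → ℝ)
    (hKsmul : ∀ (c : ℝ), 0 ≤ c → ∀ x ∈ K, c • x ∈ K)
    (hKadd : ∀ x ∈ K, ∀ y ∈ K, x + y ∈ K)
    (hconv : ConvexOn ℝ Set.univ f)
    (hdiff : Differentiable ℝ f)
    (L : ℝ) (hL : 0 < L)
    (hLip : ∀ x y, ‖gradient f x - gradient f y‖ ≤ L * ‖x - y‖)
    (xstar : EuclideanSpace ℝ (Fin d)) (hxstar : xstar ∈ K)
    (hmin : ∀ x ∈ K, f xstar ≤ f x)
    (R : ℝ) (hR : ‖xstar‖ = R)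
    (z : EuclideanSpace ℝ (Fin d)) (hz : z ∈ K)
    (hslack : ⟪gradient f z, z⟫ = 0)
    (ε : ℝ) (hε : f z - f xstar ≤ ε) :
    ‖gradient f z - gradient f xstar‖ ^ 2 ≤ 2 * L * ε ∧
    (Metric.infDist (gradient f z) {u | ∀ x ∈ K, 0 ≤ ⟪u, x⟫}) ^ 2 ≤ 2 * L * ε := by
  set gz := gradient f z with hgz
  set gs := gradient f xstar with hgs
  -- gs is in the dual cone
  have hdual : ∀ x ∈ K, 0 ≤ ⟪gs, x⟫ := by
    intro x hx
    apply dirDeriv_nonneg f hdiff xstar x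
    filter_upwards [self_mem_nhdsWithin] with t ht
    exact hmin _ (hKadd xstar hxstar _ (hKsmul t (le_of_lt ht) x hx))
  -- ⟪gs, xstar⟫ ≤ 0
  have hneg : ⟪gs, xstar⟫ ≤ 0 := by
    have h := dirDeriv_nonneg f hdiff xstar (-xstar) ?_
    · rw [inner_neg_right] at h; linarith
    · have hmem : Set.Ioo (0:ℝ) 1 ∈ nhdsWithin (0:ℝ) (Set.Ioi 0) := by
        rw [mem_nhdsWithin]
        exact ⟨Set.Iio 1, isOpen_Iio, by norm_num, fun t ht => ⟨ht.2, ht.1⟩⟩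
      filter_upwards [hmem] with t ht
      have heq : xstar + t • (-xstar) = (1 - t) • xstar := by
        rw [sub_smul]; module
      rw [heq]
      exact hmin _ (hKsmul (1 - t) (by linarith [ht.2]) xstar hxstar)
  have hzx : 0 ≤ ⟪gs, z - xstar⟫ := by
    rw [inner_sub_right]
    linarith [hdual z hz]
  -- co-coercivity at the pair (z, xstar)
  set g := gz - gs with hg
  have hεnn : 0 ≤ f z - f xstar := by linarith [hmin z hz]
  have hcoco : ‖g‖ ^ 2 ≤ 2 * L * (f z - f xstar - ⟪gs, z - xstar⟫) := by
    set v := (-(L⁻¹)) • g with hv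
    have h1 : f (z + v) ≤ f z + ⟪gz, v⟫ + L / 2 * ‖v‖ ^ 2 :=
      descent f hdiff L hL hLip z v
    have h2 : f xstar + ⟪gs, (z + v) - xstar⟫ ≤ f (z + v) :=
      subgrad f hconv hdiff xstar (z + v)
    have h3 : ⟪gs, (z + v) - xstar⟫ = ⟪gs, z - xstar⟫ + ⟪gs, v⟫ := by
      have : (z + v) - xstar = (z - xstar) + v := by abel
      rw [this, inner_add_right]
    have h4 : ⟪gz, v⟫ - ⟪gs, v⟫ = -(L⁻¹) * ‖g‖ ^ 2 := by
      rw [hv, real_inner_smul_right, real_inner_smul_right, ← mul_sub, ← inner_sub_left]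
      rw [← hg, real_inner_self_eq_norm_sq]
    have h5 : ‖v‖ ^ 2 = (L⁻¹) ^ 2 * ‖g‖ ^ 2 := by
      rw [hv, norm_smul]
      simp [mul_pow, abs_of_pos (inv_pos.mpr hL)]
    have hLne : L ≠ 0 := ne_of_gt hL
    have key : f xstar + ⟪gs, z - xstar⟫ + ⟪gs, v⟫ ≤
        f z + ⟪gz, v⟫ + L / 2 * ((L⁻¹) ^ 2 * ‖g‖ ^ 2) := by
      rw [← h5]; linarith [h1, h2, h3.ge, h3.le]
    have hfield : L / 2 * ((L⁻¹) ^ 2 * ‖g‖ ^ 2) = (1 / (2 * L)) * ‖g‖ ^ 2 := by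
      field_simp
    rw [hfield] at key
    have hhalf : L⁻¹ * ‖g‖ ^ 2 - 1 / (2 * L) * ‖g‖ ^ 2 = 1 / (2 * L) * ‖g‖ ^ 2 := by
      field_simp; ring
    have key3 : (1 / (2 * L)) * ‖g‖ ^ 2 ≤ f z - f xstar - ⟪gs, z - xstar⟫ := by
      linarith [key, h4, hhalf]
    have h2L : (0:ℝ) < 2 * L := by linarith
    calc ‖g‖ ^ 2 = 2 * L * ((1 / (2 * L)) * ‖g‖ ^ 2) := by field_simp
      _ ≤ 2 * L * (f z - f xstar - ⟪gs, z - xstar⟫) := by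
          exact mul_le_mul_of_nonneg_left key3 (le_of_lt h2L)
  have hmain : ‖g‖ ^ 2 ≤ 2 * L * ε := by
    have : f z - f xstar - ⟪gs, z - xstar⟫ ≤ ε := by linarith
    calc ‖g‖ ^ 2 ≤ 2 * L * (f z - f xstar - ⟪gs, z - xstar⟫) := hcoco
      _ ≤ 2 * L * ε := by nlinarith
  refine ⟨hmain, ?_⟩
  have hmem : gs ∈ {u : EuclideanSpace ℝ (Fin d) | ∀ x ∈ K, 0 ≤ ⟪u, x⟫} := hdual
  have hdle : Metric.infDist gz {u | ∀ x ∈ K, 0 ≤ ⟪u, x⟫} ≤ ‖g‖ := by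
    have := Metric.infDist_le_dist_of_mem (x := gz) hmem
    rwa [dist_eq_norm] at this
  have hd0 : 0 ≤ Metric.infDist gz {u : EuclideanSpace ℝ (Fin d) | ∀ x ∈ K, 0 ≤ ⟪u, x⟫} :=
    Metric.infDist_nonneg
  calc (Metric.infDist gz {u | ∀ x ∈ K, 0 ≤ ⟪u, x⟫}) ^ 2 ≤ ‖g‖ ^ 2 := by
        exact pow_le_pow_left₀ hd0 hdle 2
    _ ≤ 2 * L * ε := hmain
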